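/- Suppose moreover u is nonzero and a is a nonzero element of K, let ρ : A → K be a K-linear map with ρ(R) = a, ρ(ER) = a, and ρ(E) = b, and let R⁻¹ = R + (1−v)u⁻¹E + (u⁻¹ − 1)ER be the inverse of R. Then ρ(R⁻¹) = (a + b(1−v))/u = c·a, where c := (a + b(1−v))/(au) is the scaling factor of the Jones recipe; consequently, with π(σ) := √c·R for any √c with (√c)² = c, one has ρ(π(σ)) = ρ(π(σ)⁻¹). -/

import Mathlib

/-- In an associative unital `K`-algebra with `E² = E`, `ER = RE` and
`R² = 1 + (u−1)E + (v−1)ER`, `u ≠ 0`, `a ≠ 0`, and `ρ : A → K` a `K`-linear map with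
`ρ(R) = ρ(ER) = a` and `ρ(E) = b`, the inverse `R⁻¹ = R + (1−v)u⁻¹E + (u⁻¹−1)ER`
satisfies `ρ(R⁻¹) = (a + b(1−v))/u = c·a` where `c = (a + b(1−v))/(au)`; consequently
for any `√c` with `(√c)² = c`, `ρ(√c·R) = ρ((√c)⁻¹·R⁻¹)`. -/
theorem jones_recipe_scaling_factor
    (K : Type*) [Field K] (u v a b : K)
    (A : Type*) [Ring A] [Algebra K A]
    (E R : A)
    (hE : E * E = E)
    (hER : E * R = R * E)
    (hquad : R * R = 1 + (u - 1) • E + (v - 1) • (E * R))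
    (hu : u ≠ 0) (ha : a ≠ 0)
    (ρ : A →ₗ[K] K)
    (hρR : ρ R = a) (hρER : ρ (E * R) = a) (hρE : ρ E = b)
    (Rinv : A) (hinv : Rinv = R + ((1 - v) * u⁻¹) • E + (u⁻¹ - 1) • (E * R)) :
    ρ Rinv = (a + b * (1 - v)) / u ∧
    ρ Rinv = ((a + b * (1 - v)) / (a * u)) * a ∧
    ∀ sc : K, sc^2 = (a + b * (1 - v)) / (a * u) →
      ρ (sc • R) = ρ (sc⁻¹ • Rinv) := by
  have hval : ρ Rinv = (a + b * (1 - v)) / u := by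
    rw [hinv, map_add, map_add, map_smul, map_smul, hρR, hρER, hρE]
    simp only [smul_eq_mul]
    field_simp
    ring
  refine ⟨hval, ?_, ?_⟩
  · rw [hval]; field_simp
  · intro sc hsc
    rw [map_smul, map_smul, hρR, hval]
    rcases eq_or_ne sc 0 with h0 | h0
    · subst h0
      have : (a + b * (1 - v)) / (a * u) = 0 := by rw [← hsc]; ring
      have h1 : a + b * (1 - v) = 0 := by
        field_simp at this; simpa using this
      simp [h1]
    · have : sc * sc = (a + b * (1 - v)) / (a * u) := by rw [← hsc]; ring
      simp only [smul_eq_mul]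
      field_simp
      field_simp at this
      linear_combination this
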